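/- For every odd positive integer r and every n with 0 ≤ n ≤ r−1, the rational function f_{r,n} satisfies 𝔉(f_{r,n}) = f_{r,n}; moreover 𝔉(1/X) = 1/X. -/

import Mathlib

/-- The `n`-th coefficient of the Laurent expansion at `0` of a rational function. -/
noncomputable def coeffL (R : RatFunc ℂ) (n : ℤ) : ℂ :=
  ((R : LaurentSeries ℂ)).coeff n

open scoped Classical in
/-- The rational function `f_{r,n} = ∑_{m ∈ C_{r,n}} λ^m/(1 - λ^m X)`, where
`λ = exp(2πi/r)` and `C_{r,n} = {2^s n mod r : s ∈ ℕ}` is the 2-cyclotomic coset of `n`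
modulo `r`. -/
noncomputable def cycFun (r n : ℕ) : RatFunc ℂ :=
  ∑ m ∈ (Finset.range r).filter (fun m => ∃ s : ℕ, 2 ^ s * n % r = m),
    RatFunc.C (Complex.exp (2 * (Real.pi : ℂ) * Complex.I / r) ^ m) /
      (1 - RatFunc.C (Complex.exp (2 * (Real.pi : ℂ) * Complex.I / r) ^ m) * RatFunc.X)


lemma geomAux (a : ℂ) :
    (PowerSeries.mk (fun n => a ^ (n + 1))) * (1 - PowerSeries.C a * PowerSeries.X) =
      PowerSeries.C a := by
  have h : (PowerSeries.mk (fun n => a ^ (n + 1))) * (1 - PowerSeries.C a * PowerSeries.X) =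
      PowerSeries.mk (fun n => a ^ (n + 1)) -
        PowerSeries.C a * (PowerSeries.X * PowerSeries.mk (fun n => a ^ (n + 1))) := by ring
  rw [h]
  ext n
  rcases n with _ | n
  · simp
  · simp [PowerSeries.coeff_succ_X_mul, PowerSeries.coeff_mk, pow_succ, mul_comm]

lemma term_coe (a : ℂ) :
    ((RatFunc.C a / (1 - RatFunc.C a * RatFunc.X) : RatFunc ℂ) : LaurentSeries ℂ) =
      ((PowerSeries.mk (fun n => a ^ (n + 1)) : PowerSeries ℂ) : LaurentSeries ℂ) := by
  have hden : ((1 - PowerSeries.C a * PowerSeries.X : PowerSeries ℂ) : LaurentSeries ℂ) ≠ 0 := by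
    rw [← PowerSeries.coe_zero]
    intro h
    have := HahnSeries.ofPowerSeries_injective h
    have h0 := congrArg (PowerSeries.constantCoeff) this
    simp at h0
  have hCcoe : ((RatFunc.C a : RatFunc ℂ) : LaurentSeries ℂ) = HahnSeries.C a := by
    rw [← RatFunc.algebraMap_C, ← IsScalarTower.algebraMap_apply]
    simp
  rw [map_div₀, map_sub, map_one, map_mul, hCcoe,
    RatFunc.coe_X]
  have h1 : (HahnSeries.C a : LaurentSeries ℂ) = ((PowerSeries.C a : PowerSeries ℂ) :
      LaurentSeries ℂ) := (PowerSeries.coe_C a).symm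
  have h2 : (HahnSeries.single (1 : ℤ) (1 : ℂ)) = ((PowerSeries.X : PowerSeries ℂ) :
      LaurentSeries ℂ) := (PowerSeries.coe_X).symm
  rw [h1, h2, ← PowerSeries.coe_one (R := ℂ), ← PowerSeries.coe_mul, ← PowerSeries.coe_sub]
  rw [div_eq_iff hden, ← PowerSeries.coe_mul, geomAux]

lemma coeffL_term (a : ℂ) (k : ℤ) :
    coeffL (RatFunc.C a / (1 - RatFunc.C a * RatFunc.X)) k =
      if k < 0 then 0 else a ^ (k.natAbs + 1) := by
  unfold coeffL
  rw [term_coe, PowerSeries.coeff_coe]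
  split <;> simp [PowerSeries.coeff_mk]

lemma coeffL_sum {α : Type*} (s : Finset α) (f : α → RatFunc ℂ) (k : ℤ) :
    coeffL (∑ m ∈ s, f m) k = ∑ m ∈ s, coeffL (f m) k := by
  classical
  induction s using Finset.induction with
  | empty => simp [coeffL]
  | insert _ _ h ih =>
      rw [Finset.sum_insert h, Finset.sum_insert h, ← ih]
      simp [coeffL, map_add, HahnSeries.coeff_add]

/-- Each `f_{r,n}` (for `r` odd positive, `0 ≤ n ≤ r-1`) is fixed by `𝔉`, and `1/X` is
fixed by `𝔉`. -/
theorem stmt_15 (F : RatFunc ℂ → RatFunc ℂ)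
    (hF : ∀ R : RatFunc ℂ, ∀ k : ℤ, coeffL (F R) k = coeffL R (2 * k + 1)) :
    (∀ r n : ℕ, Odd r → 0 < r → n ≤ r - 1 → F (cycFun r n) = cycFun r n) ∧
    F RatFunc.X⁻¹ = RatFunc.X⁻¹ := by
  have key : ∀ R S : RatFunc ℂ, (∀ k : ℤ, coeffL R k = coeffL S k) → R = S := by
    intro R S h
    refine RingHom.injective _ (?_ : ((R : LaurentSeries ℂ)) = (S : LaurentSeries ℂ))
    exact HahnSeries.coeff_injective (funext h)
  constructor
  · intro r n hodd hr hn
    apply key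
    intro k
    rw [hF]
    set lam : ℂ := Complex.exp (2 * (Real.pi : ℂ) * Complex.I / r) with hlamdef
    have hlam : lam ^ r = 1 := by
      rw [hlamdef, ← Complex.exp_nat_mul]
      have : (r : ℂ) ≠ 0 := Nat.cast_ne_zero.mpr hr.ne'
      rw [mul_div_assoc', mul_div_cancel_left₀ _ this, Complex.exp_two_pi_mul_I]
    have hpowmod : ∀ x : ℕ, lam ^ (x % r) = lam ^ x := by
      intro x
      conv_rhs => rw [← Nat.mod_add_div x r, pow_add, pow_mul, hlam, one_pow, mul_one]
    classical
    unfold cycFun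
    rw [coeffL_sum, coeffL_sum]
    simp only [coeffL_term]
    rcases lt_or_ge k 0 with hk | hk
    · have : 2 * k + 1 < 0 := by omega
      simp [hk, this]
    · have h2k : ¬ (2 * k + 1 < 0) := by omega
      simp only [if_neg h2k, if_neg (not_lt.mpr hk)]
      set K := k.natAbs with hK
      have hnatAbs : (2 * k + 1).natAbs + 1 = 2 * (K + 1) := by omega
      set C := (Finset.range r).filter (fun m => ∃ s : ℕ, 2 ^ s * n % r = m) with hC
      have hcop : Nat.Coprime 2 r := Nat.coprime_two_left.mpr hodd
      have he : 2 ^ r.totient % r = 1 % r := Nat.ModEq.pow_totient hcop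
      have het : 1 ≤ r.totient := Nat.totient_pos.mpr hr
      refine Finset.sum_bij (fun m _ => 2 * m % r) ?_ ?_ ?_ ?_
      · intro m hm
        simp only [hC, Finset.mem_filter, Finset.mem_range] at hm ⊢
        obtain ⟨_, s, hs⟩ := hm
        refine ⟨Nat.mod_lt _ hr, s + 1, ?_⟩
        have : (2 : ℕ) * (2 ^ s * n) ≡ 2 * (2 ^ s * n % r) [MOD r] :=
          (Nat.mod_modEq (2 ^ s * n) r).symm.mul_left 2
        calc 2 ^ (s + 1) * n % r = 2 * (2 ^ s * n) % r := by ring_nf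
          _ = 2 * (2 ^ s * n % r) % r := this
          _ = 2 * m % r := by rw [hs]
      · intro a ha b hb hab
        simp only [hC, Finset.mem_filter, Finset.mem_range] at ha hb
        have : a ≡ b [MOD r] := (Nat.ModEq.cancel_left_of_coprime hcop.symm hab)
        rwa [Nat.ModEq, Nat.mod_eq_of_lt ha.1, Nat.mod_eq_of_lt hb.1] at this
      · intro b hb
        simp only [hC, Finset.mem_filter, Finset.mem_range] at hb
        obtain ⟨hbr, s, hs⟩ := hb
        refine ⟨2 ^ (s + r.totient - 1) * n % r, ?_, ?_⟩
        · simp only [hC, Finset.mem_filter, Finset.mem_range]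
          exact ⟨Nat.mod_lt _ hr, _, rfl⟩
        · have h1 : (2 : ℕ) * (2 ^ (s + r.totient - 1) * n % r) ≡
              2 ^ (s + r.totient) * n [MOD r] := by
            calc (2 : ℕ) * (2 ^ (s + r.totient - 1) * n % r)
                ≡ 2 * (2 ^ (s + r.totient - 1) * n) [MOD r] :=
                  (Nat.mod_modEq _ r).mul_left 2
              _ = 2 ^ (s + r.totient) * n := by
                  rw [← mul_assoc, ← pow_succ']
                  congr 2
                  omega
          have h2 : (2 : ℕ) ^ (s + r.totient) * n ≡ 2 ^ s * n [MOD r] := by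
            have : (2 : ℕ) ^ r.totient ≡ 1 [MOD r] := he
            calc (2 : ℕ) ^ (s + r.totient) * n = 2 ^ s * n * 2 ^ r.totient := by ring
              _ ≡ 2 ^ s * n * 1 [MOD r] := this.mul_left _
              _ = 2 ^ s * n := by ring
          have h4 : 2 * (2 ^ (s + r.totient - 1) * n % r) % r = 2 ^ s * n % r := h1.trans h2
          exact h4.trans hs
      · intro m hm
        rw [hnatAbs, hpowmod (2 * m), ← pow_mul, ← pow_mul]
        congr 1
        ring
  · apply key
    intro k
    have hX : ((RatFunc.X⁻¹ : RatFunc ℂ) : LaurentSeries ℂ) =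
        HahnSeries.single (-1 : ℤ) (1 : ℂ) := by
      rw [map_inv₀, RatFunc.coe_X]
      refine inv_eq_of_mul_eq_one_left ?_
      rw [HahnSeries.single_mul_single]
      norm_num
    rw [hF]
    unfold coeffL
    rw [hX, HahnSeries.coeff_single, HahnSeries.coeff_single]
    have : (2 * k + 1 = -1) ↔ (k = -1) := by omega
    simp [this]
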